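/- Let k ≥ 1 be an integer, let a ∈ ℂ not be a nonpositive integer, and let z, s ∈ ℂ satisfy either |z| < 1 (and s arbitrary) or |z| = 1 and Re(s) > k. Then the multiple Hurwitz–Lerch zeta function satisfies the decomposition Φ_k(z, s, a) = a^{−s} + Σ_{r=0}^{k−1} C(k, r) · z^{k−r} · Φ_{k−r}(z, s, a + (k − r)). -/

import Mathlib

open Complex

/-- The multiple Hurwitz–Lerch zeta function
`Φ_k(z,s,a) = ∑_{m₁,…,m_k ≥ 0} z^(m₁+⋯+m_k) / (m₁+⋯+m_k+a)^s`. -/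
noncomputable def mHurwitzLerch (k : ℕ) (z s a : ℂ) : ℂ :=
  ∑' m : Fin k → ℕ, z ^ (∑ j, m j) / (((∑ j, m j : ℕ) : ℂ) + a) ^ s

/-- The multiple Lipschitz–Lerch zeta function
`Li_k(z,s) = ∑_{m₁,…,m_k ≥ 1} z^(m₁+⋯+m_k) / (m₁+⋯+m_k)^s`. -/
noncomputable def mLipschitzLerch (k : ℕ) (z s : ℂ) : ℂ :=
  ∑' m : Fin k → ℕ+, z ^ (∑ j, (m j : ℕ)) / (((∑ j, (m j : ℕ) : ℕ) : ℂ)) ^ s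

/-- `[w]_q = (q^w - 1)/(q - 1)`, with `q^w = exp(w log q)`. -/
noncomputable def qBracket (q : ℝ) (w : ℂ) : ℂ := ((q : ℂ) ^ w - 1) / ((q : ℂ) - 1)

/-- Generalized binomial coefficient `C(s, l) = s(s-1)⋯(s-l+1)/l!`. -/
noncomputable def genBinom (s : ℂ) (l : ℕ) : ℂ :=
  (∏ i ∈ Finset.range l, (s - i)) / (l.factorial : ℂ)


section Aux

open Finset Complex Real


lemma key_choose (k n : ℕ) (hk : 1 ≤ k) :
    (k + n - 1).choose n =
      (if n = 0 then 1 else 0) +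
        ∑ r ∈ Finset.range k, k.choose r *
          (if k - r ≤ n then (n - 1).choose (k - r - 1) else 0) := by
  rcases n with _ | n
  · simp only [if_pos rfl]
    have : ∀ r ∈ Finset.range k, k.choose r *
        (if k - r ≤ 0 then (0 - 1).choose (k - r - 1) else 0) = 0 := by
      intro r hr
      rw [Finset.mem_range] at hr
      rw [if_neg (by omega)]
      ring
    rw [Finset.sum_congr rfl this]
    simp
  · rw [if_neg (Nat.succ_ne_zero n)]
    have hL : k + (n + 1) - 1 = k + n := by omega
    rw [hL, Nat.add_choose_eq, Finset.Nat.sum_antidiagonal_eq_sum_range_succ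
      (fun i j => k.choose i * n.choose j)]
    rw [Finset.sum_range_succ' (fun i => k.choose i * n.choose (n + 1 - i))]
    have h0 : k.choose 0 * n.choose (n + 1 - 0) = 0 := by
      simp [Nat.choose_eq_zero_of_lt]
    rw [h0, add_zero]
    have hL2 : ∀ i ∈ Finset.range (n + 1),
        k.choose (i + 1) * n.choose (n + 1 - (i + 1)) = k.choose (i + 1) * n.choose i := by
      intro i hi
      rw [Finset.mem_range] at hi
      congr 1
      rw [show n + 1 - (i + 1) = n - i by omega, Nat.choose_symm (by omega)]
    rw [Finset.sum_congr rfl hL2]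
    have hR : ∑ r ∈ Finset.range k, k.choose r *
          (if k - r ≤ n + 1 then (n + 1 - 1).choose (k - r - 1) else 0)
        = ∑ j ∈ Finset.range k, k.choose (j + 1) * n.choose j := by
      rw [← Finset.sum_range_reflect]
      refine Finset.sum_congr rfl fun j hj => ?_
      rw [Finset.mem_range] at hj
      have h1 : k - (k - 1 - j) = j + 1 := by omega
      rw [h1]
      have h2 : k.choose (k - 1 - j) = k.choose (j + 1) := by
        rw [show k - 1 - j = k - (j + 1) by omega, Nat.choose_symm (by omega)]
      rw [h2]
      simp only [Nat.add_sub_cancel]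
      by_cases hle : j + 1 ≤ n + 1
      · rw [if_pos hle]
      · rw [if_neg hle, Nat.choose_eq_zero_of_lt (show n < j by omega), mul_zero]
    rw [hR]
    have e1 : ∑ i ∈ Finset.range (n + 1), k.choose (i + 1) * n.choose i
        = ∑ i ∈ Finset.range (max k (n + 1)), k.choose (i + 1) * n.choose i := by
      refine Finset.sum_subset (Finset.range_subset_range.mpr (le_max_right _ _)) ?_
      intro i _ hi
      rw [Finset.mem_range, not_lt] at hi
      rw [Nat.choose_eq_zero_of_lt (show n < i by omega), mul_zero]
    have e2 : ∑ i ∈ Finset.range k, k.choose (i + 1) * n.choose i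
        = ∑ i ∈ Finset.range (max k (n + 1)), k.choose (i + 1) * n.choose i := by
      refine Finset.sum_subset (Finset.range_subset_range.mpr (le_max_left _ _)) ?_
      intro i _ hi
      rw [Finset.mem_range, not_lt] at hi
      rw [Nat.choose_eq_zero_of_lt (show k < i + 1 by omega), zero_mul]
    rw [e1, e2, zero_add]


lemma geom_aux (K : ℕ) {r : ℝ} (h0 : 0 ≤ r) (h1 : r < 1) :
    Summable (fun m : ℕ => ((m : ℝ) + 1) ^ K * r ^ m) := by
  have hfun : ∀ m : ℕ, ((m : ℝ) + 1) ^ K * r ^ m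
      = ∑ i ∈ Finset.range (K + 1), ((m : ℝ) ^ i * r ^ m) * (K.choose i : ℝ) := by
    intro m
    rw [add_pow, Finset.sum_mul]
    refine Finset.sum_congr rfl fun i _ => ?_
    ring
  rw [funext hfun]
  refine summable_sum fun i _ => ?_
  exact (summable_pow_mul_geometric_of_norm_lt_one (R := ℝ) i
    (by rwa [Real.norm_eq_abs, _root_.abs_of_nonneg h0])).mul_right _

lemma norm_cpow_inv_le {w : ℂ} (hw : w ≠ 0) (s : ℂ) :
    (‖(w ^ s)‖)⁻¹ ≤ Real.exp (Real.pi * |s.im|) * ‖w‖ ^ (-s.re) := by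
  rw [Complex.norm_cpow_of_ne_zero hw, inv_div, div_eq_mul_inv,
    ← Real.rpow_neg (norm_nonneg w)]
  refine mul_le_mul_of_nonneg_right (Real.exp_le_exp.mpr ?_)
    (Real.rpow_nonneg (norm_nonneg w) _)
  calc w.arg * s.im ≤ |w.arg * s.im| := le_abs_self _
    _ = |w.arg| * |s.im| := abs_mul _ _
    _ ≤ Real.pi * |s.im| :=
        mul_le_mul_of_nonneg_right (Complex.abs_arg_le_pi w) (abs_nonneg _)

lemma summ_master (k : ℕ) (hk : 1 ≤ k) (a z s : ℂ)
    (h : ‖z‖ < 1 ∨ (‖z‖ = 1 ∧ (k : ℝ) < s.re)) (j : ℕ) :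
    Summable (fun m : ℕ => ((m : ℝ) + k) ^ (k - 1) *
      ((‖z‖) ^ m * (‖((m : ℂ) + (j : ℂ) + a)‖) ^ (-s.re))) := by
  set A : ℝ := ‖a‖ with hA
  have hA0 : 0 ≤ A := norm_nonneg a
  set N : ℕ := ⌈A⌉₊ + 1 with hN
  have hNA : A + 1 ≤ (N : ℝ) := by
    have := Nat.le_ceil A
    push_cast [hN]
    linarith
  rw [← summable_nat_add_iff N]
  set Q : ℝ := (N : ℝ) + (j : ℝ) + A + (k : ℝ) with hQ
  have hj0 : (0:ℝ) ≤ (j:ℝ) := by positivity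
  have hk1 : (1:ℝ) ≤ (k:ℝ) := by exact_mod_cast hk
  have hQ1 : (1 : ℝ) ≤ Q := by nlinarith
  have habs : ∀ m : ℕ, ((m + N : ℕ) : ℂ) + (j : ℂ) + a = (((m + N + j : ℕ)) : ℂ) + a := by
    intro m; push_cast; ring
  have lower : ∀ m : ℕ, (m : ℝ) + 1 ≤ ‖(((m + N + j : ℕ) : ℂ) + a)‖ := by
    intro m
    have t1 : ‖((m + N + j : ℕ) : ℂ)‖ ≤ ‖((m + N + j : ℕ) : ℂ) + a‖ + ‖a‖ := by
      have : ((m + N + j : ℕ) : ℂ) = (((m + N + j : ℕ) : ℂ) + a) - a := by ring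
      rw [this]
      exact (congrArg _ (by ring : ((((m + N + j : ℕ) : ℂ) + a) - a) = _)).le.trans
        (norm_sub_le _ _)
    have t2 : ‖((m + N + j : ℕ) : ℂ)‖ = ((m + N + j : ℕ) : ℝ) := by
      rw [Complex.norm_natCast]
    rw [t2] at t1
    have : ((m + N + j : ℕ) : ℝ) = (m : ℝ) + N + j := by push_cast; ring
    rw [this] at t1
    have hj0 : (0:ℝ) ≤ (j : ℝ) := Nat.cast_nonneg j
    have : ‖((m + N + j : ℕ) : ℂ) + a‖ = ‖(((m + N + j : ℕ) : ℂ) + a)‖ := rfl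
    rw [this] at t1
    have hNa : ‖a‖ = A := rfl
    rw [hNa] at t1
    linarith
  have upper : ∀ m : ℕ, ‖(((m + N + j : ℕ) : ℂ) + a)‖ ≤ ((m : ℝ) + 1) * Q := by
    intro m
    have t1 : ‖(((m + N + j : ℕ) : ℂ) + a)‖ ≤ ((m + N + j : ℕ) : ℝ) + A :=
      (norm_add_le _ _).trans (by rw [Complex.norm_natCast])
    have t2 : ((m + N + j : ℕ) : ℝ) = (m : ℝ) + N + j := by push_cast; ring
    rw [t2] at t1
    have hm0 : (0:ℝ) ≤ (m : ℝ) := Nat.cast_nonneg m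
    nlinarith [hm0, hQ1]
  have poly : ∀ m : ℕ, (((m + N : ℕ) : ℝ) + k) ^ (k - 1) ≤ (Q * ((m : ℝ) + 1)) ^ (k - 1) := by
    intro m
    refine pow_le_pow_left₀ (by positivity) ?_ _
    have hm0 : (0:ℝ) ≤ (m : ℝ) := Nat.cast_nonneg m
    have hNval : ((N:ℕ):ℝ) = ((⌈A⌉₊:ℕ):ℝ) + 1 := by rw [hN]; push_cast; ring
    push_cast
    nlinarith [hm0, hQ1, hNA, hA0, hj0, hk1, hNval, mul_le_mul_of_nonneg_left hQ1 hm0]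
  have hwpos : ∀ m : ℕ, (0:ℝ) < ‖(((m + N + j : ℕ) : ℂ) + a)‖ := by
    intro m
    have := lower m
    have hm0 : (0:ℝ) ≤ (m : ℝ) := Nat.cast_nonneg m
    linarith
  rcases h with hz | ⟨hz1, hzk⟩
  · -- |z| < 1
    have hz0 : 0 ≤ ‖z‖ := norm_nonneg z
    set M : ℕ := ⌈|s.re|⌉₊ with hM
    have hMre : -s.re ≤ (M : ℝ) := by
      have := Nat.le_ceil |s.re|
      have h2 : -s.re ≤ |s.re| := neg_le_abs _
      linarith
    have rb : ∀ m : ℕ, (‖(((m + N + j : ℕ) : ℂ) + a)‖) ^ (-s.re)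
        ≤ Q ^ M * ((m : ℝ) + 1) ^ M := by
      intro m
      have hm1 : (1:ℝ) ≤ (m : ℝ) + 1 := by
        have : (0:ℝ) ≤ (m : ℝ) := Nat.cast_nonneg m; linarith
      have hQM : (1:ℝ) ≤ Q ^ M := one_le_pow₀ hQ1
      have hmM : (1:ℝ) ≤ ((m : ℝ) + 1) ^ M := one_le_pow₀ hm1
      rcases le_or_gt 0 s.re with hσ | hσ
      · have h1 : (‖(((m + N + j : ℕ) : ℂ) + a)‖) ^ (-s.re) ≤ 1 :=
          Real.rpow_le_one_of_one_le_of_nonpos (by linarith [lower m]) (by linarith)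
        nlinarith
      · have h2 : (‖(((m + N + j : ℕ) : ℂ) + a)‖) ^ (-s.re)
            ≤ (((m : ℝ) + 1) * Q) ^ (-s.re) :=
          Real.rpow_le_rpow (norm_nonneg _) (upper m) (by linarith)
        have h3 : (((m : ℝ) + 1) * Q) ^ (-s.re)
            = ((m : ℝ) + 1) ^ (-s.re) * Q ^ (-s.re) :=
          Real.mul_rpow (by linarith) (by linarith)
        have h4 : ((m : ℝ) + 1) ^ (-s.re) ≤ ((m : ℝ) + 1) ^ (M : ℝ) :=
          Real.rpow_le_rpow_of_exponent_le hm1 hMre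
        have h5 : Q ^ (-s.re) ≤ Q ^ (M : ℝ) :=
          Real.rpow_le_rpow_of_exponent_le hQ1 hMre
        rw [Real.rpow_natCast] at h4 h5
        calc (‖(((m + N + j : ℕ) : ℂ) + a)‖) ^ (-s.re)
            ≤ ((m : ℝ) + 1) ^ (-s.re) * Q ^ (-s.re) := by rw [← h3]; exact h2
          _ ≤ ((m : ℝ) + 1) ^ M * Q ^ M := by
              refine mul_le_mul h4 h5 (Real.rpow_nonneg (by linarith) _) (by positivity)
          _ = Q ^ M * ((m : ℝ) + 1) ^ M := by ring
    have bound : ∀ m : ℕ, (((m + N : ℕ) : ℝ) + k) ^ (k - 1) *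
          ((‖z‖) ^ (m + N) *
            (‖(((m + N : ℕ) : ℂ) + (j : ℂ) + a)‖) ^ (-s.re))
        ≤ (Q ^ (k - 1) * Q ^ M) * (((m : ℝ) + 1) ^ (k - 1 + M) * (‖z‖) ^ m) := by
      intro m
      rw [habs m]
      have hzp : (‖z‖) ^ (m + N) ≤ (‖z‖) ^ m :=
        pow_le_pow_of_le_one hz0 hz.le (Nat.le_add_right m N)
      have inner : (‖z‖) ^ (m + N) *
            (‖(((m + N + j : ℕ) : ℂ) + a)‖) ^ (-s.re)
          ≤ (‖z‖) ^ m * (Q ^ M * ((m : ℝ) + 1) ^ M) :=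
        mul_le_mul hzp (rb m) (Real.rpow_nonneg (norm_nonneg _) _) (by positivity)
      calc (((m + N : ℕ) : ℝ) + k) ^ (k - 1) * ((‖z‖) ^ (m + N) *
            (‖(((m + N + j : ℕ) : ℂ) + a)‖) ^ (-s.re))
          ≤ (Q * ((m : ℝ) + 1)) ^ (k - 1) *
              ((‖z‖) ^ m * (Q ^ M * ((m : ℝ) + 1) ^ M)) := by
            refine mul_le_mul (poly m) inner (by positivity) (by positivity)
        _ = (Q ^ (k - 1) * Q ^ M) * (((m : ℝ) + 1) ^ (k - 1 + M) * (‖z‖) ^ m) := by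
            rw [mul_pow, pow_add]; ring
    refine Summable.of_nonneg_of_le (fun m => by positivity) bound ?_
    exact ((geom_aux (k - 1 + M) hz0 hz).mul_left _)
  · -- |z| = 1, k < s.re
    have hσ0 : (0:ℝ) < s.re := by
      have : (1:ℝ) ≤ (k:ℝ) := by exact_mod_cast hk
      linarith
    set p : ℝ := ((k : ℝ) - 1) - s.re with hp
    have hplt : p < -1 := by
      rw [hp]; linarith
    have rb2 : ∀ m : ℕ, (‖(((m + N + j : ℕ) : ℂ) + a)‖) ^ (-s.re)
        ≤ ((m : ℝ) + 1) ^ (-s.re) := by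
      intro m
      have hm1 : (0:ℝ) < (m : ℝ) + 1 := by positivity
      have h1 : ((m : ℝ) + 1) ^ s.re ≤ (‖(((m + N + j : ℕ) : ℂ) + a)‖) ^ s.re :=
        Real.rpow_le_rpow hm1.le (lower m) hσ0.le
      rw [Real.rpow_neg (norm_nonneg _), Real.rpow_neg hm1.le]
      exact inv_anti₀ (Real.rpow_pos_of_pos hm1 _) h1
    have bound : ∀ m : ℕ, (((m + N : ℕ) : ℝ) + k) ^ (k - 1) *
          ((‖z‖) ^ (m + N) *
            (‖(((m + N : ℕ) : ℂ) + (j : ℂ) + a)‖) ^ (-s.re))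
        ≤ Q ^ (k - 1) * ((m : ℝ) + 1) ^ p := by
      intro m
      rw [habs m, hz1, one_pow, one_mul]
      have hm1 : (0:ℝ) < (m : ℝ) + 1 := by positivity
      have e1 : ((m : ℝ) + 1) ^ p = ((m : ℝ) + 1) ^ (k - 1) * ((m : ℝ) + 1) ^ (-s.re) := by
        rw [← Real.rpow_natCast ((m:ℝ)+1) (k-1), ← Real.rpow_add hm1]
        congr 1
        rw [hp]
        have : ((k - 1 : ℕ) : ℝ) = (k : ℝ) - 1 := by
          push_cast [Nat.cast_sub hk]; ring
        rw [this]; ring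
      calc (((m + N : ℕ) : ℝ) + k) ^ (k - 1) *
            (‖(((m + N + j : ℕ) : ℂ) + a)‖) ^ (-s.re)
          ≤ (Q * ((m : ℝ) + 1)) ^ (k - 1) * ((m : ℝ) + 1) ^ (-s.re) := by
            refine mul_le_mul (poly m) (rb2 m)
              (Real.rpow_nonneg (norm_nonneg _) _) (by positivity)
        _ = Q ^ (k - 1) * (((m : ℝ) + 1) ^ (k - 1) * ((m : ℝ) + 1) ^ (-s.re)) := by
            rw [mul_pow]; ring
        _ = Q ^ (k - 1) * ((m : ℝ) + 1) ^ p := by rw [← e1]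
    refine Summable.of_nonneg_of_le (fun m => by positivity) bound ?_
    refine Summable.mul_left _ ?_
    have h1 : Summable (fun n : ℕ => (n : ℝ) ^ p) := Real.summable_nat_rpow.mpr hplt
    have h2 := (summable_nat_add_iff 1).mpr h1
    refine h2.congr fun m => ?_
    norm_cast

lemma card_antidiagonalTuple (k n : ℕ) :
    (Finset.Nat.antidiagonalTuple k n).card = (k + n - 1).choose n := by
  have h1 : Finset.Nat.antidiagonalTuple k n
      = Finset.piAntidiag (Finset.univ : Finset (Fin k)) n := by
    ext f
    simp [Finset.Nat.mem_antidiagonalTuple, Finset.mem_piAntidiag]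
  have h2 : (Finset.univ : Finset (Fin k)).sym n = (Finset.univ : Finset (Sym (Fin k) n)) := by
    ext m
    simp [Finset.mem_sym_iff]
  rw [h1, ← Finset.map_sym_eq_piAntidiag, Finset.card_map, h2, Finset.card_univ,
    Sym.card_sym_eq_choose, Fintype.card_fin]

lemma oneDim (k : ℕ) (z s a : ℂ)
    (hs : Summable (fun n : ℕ => (((k + n - 1).choose n : ℕ) : ℝ) *
      ‖z ^ n / ((n : ℂ) + a) ^ s‖)) :
    mHurwitzLerch k z s a
      = ∑' n : ℕ, (((k + n - 1).choose n : ℕ) : ℂ) * (z ^ n / ((n : ℂ) + a) ^ s) := by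
  classical
  set g : ℕ → ℂ := fun n => z ^ n / ((n : ℂ) + a) ^ s with hg
  have hfg : ∀ p : (Σ n : ℕ, (Finset.Nat.antidiagonalTuple k n : Finset (Fin k → ℕ))),
      z ^ (∑ j, (Finset.Nat.sigmaAntidiagonalTupleEquivTuple k p) j) /
        (((∑ j, (Finset.Nat.sigmaAntidiagonalTupleEquivTuple k p) j : ℕ) : ℂ) + a) ^ s
        = g p.1 := by
    rintro ⟨n, t, ht⟩
    have hsum : ∑ j, t j = n := Finset.Nat.mem_antidiagonalTuple.mp ht
    simp only [Finset.Nat.sigmaAntidiagonalTupleEquivTuple, Equiv.coe_fn_mk, hg]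
    rw [hsum]
  have hcardsum : ∀ n : ℕ, ∑' _ : (Finset.Nat.antidiagonalTuple k n : Finset (Fin k → ℕ)),
      g n = (((k + n - 1).choose n : ℕ) : ℂ) * g n := by
    intro n
    rw [tsum_fintype]
    rw [Finset.sum_const, Finset.card_univ, Fintype.card_coe, card_antidiagonalTuple,
      nsmul_eq_mul]
  have hnormsum : Summable (fun p : (Σ n : ℕ,
      (Finset.Nat.antidiagonalTuple k n : Finset (Fin k → ℕ))) => ‖g p.1‖) := by
    refine (summable_sigma_of_nonneg fun _ => norm_nonneg _).mpr ⟨fun n => ?_, ?_⟩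
    · exact (hasSum_fintype _).summable
    · refine hs.congr fun n => ?_
      rw [tsum_fintype]
      simp only [Finset.sum_const, Finset.card_univ, Fintype.card_coe, card_antidiagonalTuple,
        nsmul_eq_mul, hg]
  have hsum2 : Summable (fun p : (Σ n : ℕ,
      (Finset.Nat.antidiagonalTuple k n : Finset (Fin k → ℕ))) => g p.1) :=
    hnormsum.of_norm
  calc mHurwitzLerch k z s a
      = ∑' p : (Σ n : ℕ, (Finset.Nat.antidiagonalTuple k n : Finset (Fin k → ℕ))),
          z ^ (∑ j, (Finset.Nat.sigmaAntidiagonalTupleEquivTuple k p) j) /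
            (((∑ j, (Finset.Nat.sigmaAntidiagonalTupleEquivTuple k p) j : ℕ) : ℂ) + a) ^ s :=
        ((Finset.Nat.sigmaAntidiagonalTupleEquivTuple k).tsum_eq _).symm
    _ = ∑' p : (Σ n : ℕ, (Finset.Nat.antidiagonalTuple k n : Finset (Fin k → ℕ))), g p.1 :=
        tsum_congr hfg
    _ = ∑' n : ℕ, ∑' _ : (Finset.Nat.antidiagonalTuple k n : Finset (Fin k → ℕ)), g n :=
        hsum2.tsum_sigma
    _ = ∑' n : ℕ, (((k + n - 1).choose n : ℕ) : ℂ) * g n := tsum_congr hcardsum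

noncomputable def cFc (j n : ℕ) : ℂ :=
  if j ≤ n then (((n - 1).choose (j - 1) : ℕ) : ℂ) else 0


end Aux

/-- Decomposition of the multiple Hurwitz–Lerch zeta function into lower-order ones. -/
theorem mHurwitzLerch_decomposition (k : ℕ) (hk : 1 ≤ k) (a z s : ℂ)
    (ha : ∀ n : ℕ, a ≠ -(n : ℂ))
    (h : ‖z‖ < 1 ∨ (‖z‖ = 1 ∧ (k : ℝ) < s.re)) :
    mHurwitzLerch k z s a =
      a ^ (-s) +
        ∑ r ∈ Finset.range k, (k.choose r : ℂ) * z ^ (k - r) *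
          mHurwitzLerch (k - r) z s (a + ((k - r : ℕ) : ℂ)) := by
  classical
  set g : ℕ → ℂ := fun n => z ^ n / ((n : ℂ) + a) ^ s with hgdef
  set E : ℝ := Real.exp (Real.pi * |s.im|) with hEdef
  have hE0 : 0 ≤ E := (Real.exp_pos _).le
  have han : ∀ j n : ℕ, ((n : ℂ) + (j : ℂ) + a) ≠ 0 := by
    intro j n hzero
    refine ha (n + j) ?_
    push_cast
    linear_combination hzero
  -- norm bound
  have normg : ∀ j n : ℕ, ‖z ^ n / ((n : ℂ) + (j : ℂ) + a) ^ s‖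
      ≤ E * ((‖z‖) ^ n *
        (‖((n : ℂ) + (j : ℂ) + a)‖) ^ (-s.re)) := by
    intro j n
    rw [norm_div, norm_pow]
    have h1 : ‖((n : ℂ) + (j : ℂ) + a) ^ s‖⁻¹
        ≤ E * (‖((n : ℂ) + (j : ℂ) + a)‖) ^ (-s.re) :=
      norm_cpow_inv_le (han j n) s
    have h2 : ‖z‖ ^ n * ‖((n : ℂ) + (j : ℂ) + a) ^ s‖⁻¹
        ≤ ‖z‖ ^ n * (E * (‖((n : ℂ) + (j : ℂ) + a)‖) ^ (-s.re)) :=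
      mul_le_mul_of_nonneg_left h1 (by positivity)
    rw [div_eq_mul_inv]
    calc ‖z‖ ^ n * ‖((n : ℂ) + (j : ℂ) + a) ^ s‖⁻¹
        ≤ ‖z‖ ^ n * (E * (‖((n : ℂ) + (j : ℂ) + a)‖) ^ (-s.re)) := h2
      _ = E * ((‖z‖) ^ n *
          (‖((n : ℂ) + (j : ℂ) + a)‖) ^ (-s.re)) := by
          ring
  -- dominating series
  have Dsum : ∀ j : ℕ, Summable (fun n : ℕ => ((n : ℝ) + k) ^ (k - 1) *
      (E * ((‖z‖) ^ n *
        (‖((n : ℂ) + (j : ℂ) + a)‖) ^ (-s.re)))) := by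
    intro j
    have := (summ_master k hk a z s h j).mul_left E
    refine this.congr fun n => ?_
    ring
  -- coefficient bounds (ℕ)
  have cb1 : ∀ n : ℕ, (k + n - 1).choose n ≤ (n + k) ^ (k - 1) := by
    intro n
    have e1 : (k + n - 1).choose n = (k + n - 1).choose (k - 1) := by
      rw [← Nat.choose_symm (by omega)]
      congr 1
      omega
    rw [e1]
    calc (k + n - 1).choose (k - 1) ≤ (k + n - 1) ^ (k - 1) := Nat.choose_le_pow _ _
      _ ≤ (n + k) ^ (k - 1) := Nat.pow_le_pow_left (by omega) _
  have cb2 : ∀ j : ℕ, 1 ≤ j → j ≤ k → ∀ n : ℕ,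
      (n - 1).choose (j - 1) ≤ (n + k) ^ (k - 1) := by
    intro j hj1 hjk n
    calc (n - 1).choose (j - 1) ≤ (n - 1) ^ (j - 1) := Nat.choose_le_pow _ _
      _ ≤ (n + k) ^ (j - 1) := Nat.pow_le_pow_left (by omega) _
      _ ≤ (n + k) ^ (k - 1) := Nat.pow_le_pow_right (by omega) (by omega)
  have cb3 : ∀ j : ℕ, 1 ≤ j → j ≤ k → ∀ m : ℕ,
      (j + m - 1).choose m ≤ (m + k) ^ (k - 1) := by
    intro j hj1 hjk m
    have e1 : (j + m - 1).choose m = (j + m - 1).choose (j - 1) := by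
      rw [← Nat.choose_symm (by omega)]
      congr 1
      omega
    rw [e1]
    calc (j + m - 1).choose (j - 1) ≤ (j + m - 1) ^ (j - 1) := Nat.choose_le_pow _ _
      _ ≤ (m + k) ^ (j - 1) := Nat.pow_le_pow_left (by omega) _
      _ ≤ (m + k) ^ (k - 1) := Nat.pow_le_pow_right (by omega) (by omega)
  have castpow : ∀ n : ℕ, (((n + k) ^ (k - 1) : ℕ) : ℝ) = ((n : ℝ) + k) ^ (k - 1) := by
    intro n; push_cast; ring
  -- summability for oneDim at (k, a)
  have hs1 : Summable (fun n : ℕ => (((k + n - 1).choose n : ℕ) : ℝ) * ‖g n‖) := by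
    refine Summable.of_nonneg_of_le (fun n => by positivity) (fun n => ?_) (Dsum 0)
    simp only [Nat.cast_zero, add_zero]
    have hb : ‖g n‖ ≤ E * ((‖z‖) ^ n *
        (‖((n : ℂ) + a)‖) ^ (-s.re)) := by
      have := normg 0 n
      simpa [hgdef, map_div₀, map_pow] using this
    have hc : (((k + n - 1).choose n : ℕ) : ℝ) ≤ ((n : ℝ) + k) ^ (k - 1) := by
      rw [← castpow n]
      exact_mod_cast cb1 n
    exact mul_le_mul hc hb (norm_nonneg _) (by positivity)
  -- cleaned dominating series at j = 0
  have D0 : Summable (fun n : ℕ => ((n : ℝ) + k) ^ (k - 1) *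
      (E * ((‖z‖) ^ n * (‖((n : ℂ) + a)‖) ^ (-s.re)))) := by
    refine (Dsum 0).congr fun n => ?_
    norm_num
  have hgb : ∀ n : ℕ, ‖g n‖ ≤ E * ((‖z‖) ^ n *
      (‖((n : ℂ) + a)‖) ^ (-s.re)) := by
    intro n
    have := normg 0 n
    simpa [hgdef, map_div₀, map_pow] using this
  -- summability for oneDim at (j, a + j)
  have hs2 : ∀ j : ℕ, 1 ≤ j → j ≤ k →
      Summable (fun m : ℕ => (((j + m - 1).choose m : ℕ) : ℝ) *
        ‖z ^ m / ((m : ℂ) + (a + (j : ℂ))) ^ s‖) := by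
    intro j hj1 hjk
    refine Summable.of_nonneg_of_le (fun m => by positivity) (fun m => ?_) (Dsum j)
    have e : ((m : ℂ) + (a + (j : ℂ))) = ((m : ℂ) + (j : ℂ) + a) := by ring
    rw [e]
    have hc : (((j + m - 1).choose m : ℕ) : ℝ) ≤ ((m : ℝ) + k) ^ (k - 1) := by
      rw [← castpow m]
      exact_mod_cast cb3 j hj1 hjk m
    exact mul_le_mul hc (normg j m) (norm_nonneg _) (by positivity)
  -- summability of the indicator-coefficient series
  have hsF : ∀ j : ℕ, 1 ≤ j → j ≤ k → Summable (fun n : ℕ => cFc j n * g n) := by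
    intro j hj1 hjk
    refine Summable.of_norm ?_
    refine Summable.of_nonneg_of_le (fun n => norm_nonneg _) (fun n => ?_) D0
    rw [norm_mul]
    have hc : ‖cFc j n‖ ≤ ((n : ℝ) + k) ^ (k - 1) := by
      rw [cFc]
      by_cases hjn : j ≤ n
      · rw [if_pos hjn, Complex.norm_natCast, ← castpow n]
        exact_mod_cast cb2 j hj1 hjk n
      · rw [if_neg hjn, norm_zero]
        positivity
    exact mul_le_mul hc (hgb n) (norm_nonneg _) (by positivity)
  -- rewrite each RHS term as a tsum over ℕ
  have hr : ∀ r ∈ Finset.range k,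
      (k.choose r : ℂ) * z ^ (k - r) * mHurwitzLerch (k - r) z s (a + ((k - r : ℕ) : ℂ))
        = ∑' n : ℕ, (k.choose r : ℂ) * (cFc (k - r) n * g n) := by
    intro r hr'
    rw [Finset.mem_range] at hr'
    have hj1 : 1 ≤ k - r := by omega
    have hjk : k - r ≤ k := by omega
    rw [oneDim (k - r) z s (a + ((k - r : ℕ) : ℂ)) (hs2 (k - r) hj1 hjk)]
    rw [← tsum_mul_left]
    have hpt : ∀ m : ℕ, ((k.choose r : ℂ) * z ^ (k - r)) *
          ((((k - r + m - 1).choose m : ℕ) : ℂ) *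
            (z ^ m / ((m : ℂ) + (a + ((k - r : ℕ) : ℂ))) ^ s))
        = (k.choose r : ℂ) * (cFc (k - r) (m + (k - r)) * g (m + (k - r))) := by
      intro m
      have hch : (k - r + m - 1).choose m = (m + (k - r) - 1).choose (k - r - 1) := by
        rw [← Nat.choose_symm (show m ≤ k - r + m - 1 by omega)]
        congr 1
        · omega
        · omega
      have e1 : cFc (k - r) (m + (k - r))
          = (((m + (k - r) - 1).choose (k - r - 1) : ℕ) : ℂ) := by
        rw [cFc, if_pos (by omega)]
      have e2 : g (m + (k - r)) = z ^ (m + (k - r)) / (((m + (k - r) : ℕ) : ℂ) + a) ^ s := rfl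
      have e3 : ((m : ℂ) + (a + ((k - r : ℕ) : ℂ))) = (((m + (k - r) : ℕ) : ℂ) + a) := by
        push_cast
        ring
      rw [e1, e2, e3, hch]
      rw [pow_add]
      ring
    rw [tsum_congr hpt]
    have hH : Summable (fun n : ℕ => (k.choose r : ℂ) * (cFc (k - r) n * g n)) :=
      (hsF (k - r) hj1 hjk).mul_left _
    have step3 := Summable.sum_add_tsum_nat_add (f := fun n : ℕ => (k.choose r : ℂ) *
      (cFc (k - r) n * g n)) (k - r) hH
    have hzero : ∑ i ∈ Finset.range (k - r), (k.choose r : ℂ) * (cFc (k - r) i * g i) = 0 := by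
      refine Finset.sum_eq_zero fun i hi => ?_
      rw [Finset.mem_range] at hi
      rw [cFc, if_neg (by omega)]
      ring
    rw [← step3, hzero, zero_add]
  -- assemble the right-hand side
  rw [Finset.sum_congr rfl hr]
  have hInd : Summable (fun n : ℕ => if n = 0 then a ^ (-s) else 0) := by
    refine summable_of_ne_finset_zero (s := {0}) fun n hn => ?_
    rw [if_neg (by simpa using hn)]
  have hSummands : ∀ r ∈ Finset.range k,
      Summable (fun n : ℕ => (k.choose r : ℂ) * (cFc (k - r) n * g n)) := by
    intro r hr'
    rw [Finset.mem_range] at hr'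
    exact (hsF (k - r) (by omega) (by omega)).mul_left _
  have hSum : Summable (fun n : ℕ => ∑ r ∈ Finset.range k,
      (k.choose r : ℂ) * (cFc (k - r) n * g n)) := summable_sum hSummands
  have hswap : ∑ r ∈ Finset.range k, ∑' n : ℕ, (k.choose r : ℂ) * (cFc (k - r) n * g n)
      = ∑' n : ℕ, ∑ r ∈ Finset.range k, (k.choose r : ℂ) * (cFc (k - r) n * g n) :=
    (Summable.tsum_finsetSum hSummands).symm
  rw [hswap]
  have hind : a ^ (-s) = ∑' n : ℕ, (if n = 0 then a ^ (-s) else 0) :=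
    (tsum_ite_eq 0 (fun _ => a ^ (-s))).symm
  rw [hind, ← Summable.tsum_add hInd hSum]
  -- left-hand side
  rw [oneDim k z s a hs1]
  refine tsum_congr fun n => ?_
  -- per-coefficient identity
  have hg0 : g 0 = a ^ (-s) := by
    rw [hgdef]
    simp only [pow_zero, Nat.cast_zero, zero_add, Complex.cpow_neg, one_div]
  have hcoef : (((k + n - 1).choose n : ℕ) : ℂ)
      = (if n = 0 then (1 : ℂ) else 0) + ∑ r ∈ Finset.range k,
          (k.choose r : ℂ) * cFc (k - r) n := by
    have hnat := key_choose k n hk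
    have : (((k + n - 1).choose n : ℕ) : ℂ)
        = (((if n = 0 then 1 else 0) + ∑ r ∈ Finset.range k, k.choose r *
            (if k - r ≤ n then (n - 1).choose (k - r - 1) else 0) : ℕ) : ℂ) := by
      exact_mod_cast congrArg (Nat.cast : ℕ → ℂ) hnat
    rw [this]
    push_cast
    congr 1
  rw [hcoef, add_mul, Finset.sum_mul]
  congr 1
  · split
    · rename_i hn0
      rw [hn0]
      norm_num [Complex.cpow_neg]
    · rw [zero_mul]
  · refine Finset.sum_congr rfl fun r _ => ?_
    ring
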